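/- (Conditional-to-marginal velocity) Let $p_t(x \mid x_0, x_1)$ be a differentiable-in-$t$ family of conditional PMFs on $\mathcal{D} = [d]^N$ and suppose the conditional velocities $u^i_t(x^i, z \mid x_0, x_1)$ satisfy the discrete continuity equation $\dot p_t(x \mid x_0, x_1) = \sum_{z \in \mathcal{D}} p_t(z \mid x_0, x_1) \sum_{i=1}^N \delta_z(x^{\bar i})\, u^i_t(x^i, z \mid x_0, x_1)$ for all $x, x_0, x_1$. Let $\pi$ be a PMF on $\mathcal{D}^2$, define the marginal path $p_t(x) = \sum_{x_0,x_1} p_t(x\mid x_0,x_1)\pi(x_0,x_1)$, and the marginal velocity $u^i_t(x^i, z) = \sum_{x_0,x_1} u^i_t(x^i, z \mid x_0, x_1)\, p_t(z \mid x_0, x_1)\pi(x_0,x_1)/p_t(z)$ for $z$ with $p_t(z)>0$ (and $0$ otherwise). If $p_t(z) > 0$ for all $z$, then the marginal velocity satisfies the continuity equation for the marginal path: $\dot p_t(x) = \sum_{z} p_t(z) \sum_{i=1}^N \delta_z(x^{\bar i})\, u^i_t(x^i, z)$. -/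

import Mathlib

open Finset


private lemma sum_swap4 {α β γ ε : Type*} [Fintype α] [Fintype β] [Fintype γ] [Fintype ε]
    (f : α → β → γ → ε → ℝ) :
    ∑ a : α, ∑ b : β, ∑ c : γ, ∑ e : ε, f a b c e
      = ∑ c : γ, ∑ e : ε, ∑ a : α, ∑ b : β, f a b c e := by
  calc ∑ a : α, ∑ b : β, ∑ c : γ, ∑ e : ε, f a b c e
      = ∑ a : α, ∑ c : γ, ∑ b : β, ∑ e : ε, f a b c e :=
        Finset.sum_congr rfl fun a _ => Finset.sum_comm
    _ = ∑ c : γ, ∑ a : α, ∑ b : β, ∑ e : ε, f a b c e := Finset.sum_comm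
    _ = ∑ c : γ, ∑ a : α, ∑ e : ε, ∑ b : β, f a b c e :=
        Finset.sum_congr rfl fun c _ => Finset.sum_congr rfl fun a _ => Finset.sum_comm
    _ = ∑ c : γ, ∑ e : ε, ∑ a : α, ∑ b : β, f a b c e :=
        Finset.sum_congr rfl fun c _ => Finset.sum_comm

/-- Theorem 1 (conditional-to-marginal velocity): if each conditional velocity
satisfies the discrete continuity equation for its conditional path, then the
posterior-weighted marginal velocity satisfies the continuity equation for the
marginal path, provided `p_t(z) > 0` everywhere. -/
theorem conditional_to_marginal_velocity (N d : ℕ) (hN : 1 ≤ N) (hd : 1 ≤ d)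
    (pc : ℝ → (Fin N → Fin d) → (Fin N → Fin d) → (Fin N → Fin d) → ℝ)
    (uc : ℝ → (Fin N → Fin d) → (Fin N → Fin d) → Fin d → Fin N → (Fin N → Fin d) → ℝ)
    (π : (Fin N → Fin d) → (Fin N → Fin d) → ℝ)
    (t : ℝ)
    (hcont : ∀ (x x0 x1 : Fin N → Fin d),
      HasDerivAt (fun s => pc s x0 x1 x)
        (∑ z : Fin N → Fin d, pc t x0 x1 z *
          ∑ i : Fin N,
            (∏ j ∈ Finset.univ \ {i}, if x j = z j then (1 : ℝ) else 0) *
              uc t x0 x1 (x i) i z) t)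
    (hpos : ∀ z : Fin N → Fin d,
      0 < ∑ x0 : Fin N → Fin d, ∑ x1 : Fin N → Fin d, pc t x0 x1 z * π x0 x1) :
    ∀ x : Fin N → Fin d,
      HasDerivAt
        (fun s => ∑ x0 : Fin N → Fin d, ∑ x1 : Fin N → Fin d, pc s x0 x1 x * π x0 x1)
        (∑ z : Fin N → Fin d,
          (∑ x0 : Fin N → Fin d, ∑ x1 : Fin N → Fin d, pc t x0 x1 z * π x0 x1) *
            ∑ i : Fin N,
              (∏ j ∈ Finset.univ \ {i}, if x j = z j then (1 : ℝ) else 0) *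
                ((∑ x0 : Fin N → Fin d, ∑ x1 : Fin N → Fin d,
                    uc t x0 x1 (x i) i z * pc t x0 x1 z * π x0 x1) /
                  (∑ x0 : Fin N → Fin d, ∑ x1 : Fin N → Fin d, pc t x0 x1 z * π x0 x1)))
        t := by
  intro x
  have hder : HasDerivAt
      (fun s => ∑ x0 : Fin N → Fin d, ∑ x1 : Fin N → Fin d, pc s x0 x1 x * π x0 x1)
      (∑ x0 : Fin N → Fin d, ∑ x1 : Fin N → Fin d,
        (∑ z : Fin N → Fin d, pc t x0 x1 z *
          ∑ i : Fin N,
            (∏ j ∈ Finset.univ \ {i}, if x j = z j then (1 : ℝ) else 0) *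
              uc t x0 x1 (x i) i z) * π x0 x1) t := by
    apply HasDerivAt.fun_sum
    intro x0 _
    apply HasDerivAt.fun_sum
    intro x1 _
    exact (hcont x x0 x1).mul_const _
  convert hder using 1
  have key : ∀ z : Fin N → Fin d,
      (∑ x0 : Fin N → Fin d, ∑ x1 : Fin N → Fin d, pc t x0 x1 z * π x0 x1) *
        ∑ i : Fin N,
          (∏ j ∈ Finset.univ \ {i}, if x j = z j then (1 : ℝ) else 0) *
            ((∑ x0 : Fin N → Fin d, ∑ x1 : Fin N → Fin d,
                uc t x0 x1 (x i) i z * pc t x0 x1 z * π x0 x1) /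
              (∑ x0 : Fin N → Fin d, ∑ x1 : Fin N → Fin d, pc t x0 x1 z * π x0 x1))
      = ∑ i : Fin N,
          (∏ j ∈ Finset.univ \ {i}, if x j = z j then (1 : ℝ) else 0) *
            (∑ x0 : Fin N → Fin d, ∑ x1 : Fin N → Fin d,
              uc t x0 x1 (x i) i z * pc t x0 x1 z * π x0 x1) := by
    intro z
    have hz := (hpos z).ne'
    rw [Finset.mul_sum]
    refine Finset.sum_congr rfl fun i _ => ?_
    field_simp
  rw [Finset.sum_congr rfl fun z _ => key z]
  simp only [Finset.mul_sum, Finset.sum_mul]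
  rw [← sum_swap4 fun x0 x1 z (i : Fin N) =>
    (∏ j ∈ Finset.univ \ {i}, if x j = z j then (1 : ℝ) else 0) *
      (uc t x0 x1 (x i) i z * pc t x0 x1 z * π x0 x1)]
  refine Finset.sum_congr rfl fun x0 _ => Finset.sum_congr rfl fun x1 _ =>
    Finset.sum_congr rfl fun z _ => Finset.sum_congr rfl fun i _ => ?_
  ring
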